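/- Let n ≥ 2, let Ω ∈ ℝⁿ be a unit vector, let η ∈ ℝ, and let G_η(u) := e^{η(u·Ω)²}/Z_η with Z_η := ∫_{S^{n−1}} e^{η(v·Ω)²} dσ(v). Define S₂(η) := (n/(n−1)) ∫_{S^{n−1}} ( (u·Ω)² − 1/n ) G_η(u) dσ(u). Then the Q-tensor of G_η is uniaxial: ∫_{S^{n−1}} ( u⊗u − (1/n) Id ) G_η(u) dσ(u) = S₂(η) ( Ω⊗Ω − (1/n) Id ). -/

import Mathlib

open MeasureTheory Metric
open scoped RealInnerProductSpace

/-- The image of a point of the unit sphere of `ℝⁿ` under a linear isometry. -/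
noncomputable def sphereMap {n : ℕ}
    (e : EuclideanSpace ℝ (Fin n) ≃ₗᵢ[ℝ] EuclideanSpace ℝ (Fin n))
    (u : sphere (0 : EuclideanSpace ℝ (Fin n)) 1) :
    sphere (0 : EuclideanSpace ℝ (Fin n)) 1 :=
  ⟨e u, by
    rw [mem_sphere_zero_iff_norm, e.norm_map]
    exact mem_sphere_zero_iff_norm.mp u.2⟩

/-- A measure on the unit sphere of `ℝⁿ` is rotation invariant if it is invariant under
every linear isometry of `ℝⁿ`. -/
def RotationInvariant {n : ℕ} (σ : Measure (sphere (0 : EuclideanSpace ℝ (Fin n)) 1)) :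
    Prop :=
  ∀ e : EuclideanSpace ℝ (Fin n) ≃ₗᵢ[ℝ] EuclideanSpace ℝ (Fin n),
    σ.map (sphereMap e) = σ

/-- The Gibbs density `G_η(u) = e^{η(u·Ω)²}/Z_η` on the unit sphere, with
`Z_η = ∫ e^{η(v·Ω)²} dσ(v)`. -/
noncomputable def gibbs {n : ℕ} (σ : Measure (sphere (0 : EuclideanSpace ℝ (Fin n)) 1))
    (η : ℝ) (Ω : EuclideanSpace ℝ (Fin n))
    (u : sphere (0 : EuclideanSpace ℝ (Fin n)) 1) : ℝ :=
  Real.exp (η * ⟪(u : EuclideanSpace ℝ (Fin n)), Ω⟫ ^ 2) /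
    ∫ v : sphere (0 : EuclideanSpace ℝ (Fin n)) 1,
      Real.exp (η * ⟪(v : EuclideanSpace ℝ (Fin n)), Ω⟫ ^ 2) ∂σ

section Aux

variable {n : ℕ}

local notation "E" => EuclideanSpace ℝ (Fin n)
local notation "S" => sphere (0 : EuclideanSpace ℝ (Fin n)) 1

lemma integrable_of_continuous (σ : Measure S) [IsFiniteMeasure σ] {f : S → ℝ}
    (hf : Continuous f) : Integrable f σ := by
  apply hf.integrable_of_hasCompactSupport
  exact IsCompact.of_isClosed_subset isCompact_univ (isClosed_tsupport f) (Set.subset_univ _)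

lemma continuous_sphereMap (e : E ≃ₗᵢ[ℝ] E) : Continuous (sphereMap e) :=
  Continuous.subtype_mk (e.continuous.comp continuous_subtype_val) _

lemma integral_sphereMap (σ : Measure S) (hinv : RotationInvariant σ)
    (e : E ≃ₗᵢ[ℝ] E) {f : S → ℝ} (hf : Continuous f) :
    ∫ u, f (sphereMap e u) ∂σ = ∫ u, f u ∂σ := by
  conv_rhs => rw [← hinv e]
  rw [integral_map (continuous_sphereMap e).aemeasurable hf.aestronglyMeasurable]

lemma continuous_expinner (η : ℝ) (Ω : E) :
    Continuous fun u : S => Real.exp (η * ⟪(u : E), Ω⟫ ^ 2) :=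
  Real.continuous_exp.comp (continuous_const.mul
    ((continuous_subtype_val.inner continuous_const).pow 2))

lemma continuous_gibbs (σ : Measure S) (η : ℝ) (Ω : E) : Continuous (gibbs σ η Ω) :=
  (continuous_expinner η Ω).div_const _

lemma Z_pos (σ : Measure S) [IsProbabilityMeasure σ] (η : ℝ) (Ω : E) (hΩ : ‖Ω‖ = 1) :
    0 < ∫ v : S, Real.exp (η * ⟪(v : E), Ω⟫ ^ 2) ∂σ := by
  have h1 : ∀ v : S, Real.exp (-|η|) ≤ Real.exp (η * ⟪(v : E), Ω⟫ ^ 2) := by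
    intro v
    apply Real.exp_le_exp.mpr
    have hv : ‖(v : E)‖ = 1 := mem_sphere_zero_iff_norm.mp v.2
    have h2 : |⟪(v : E), Ω⟫| ≤ 1 := by
      have := abs_real_inner_le_norm (v : E) Ω
      rwa [hv, hΩ, one_mul] at this
    have ht1 : ⟪(v : E), Ω⟫ ^ 2 ≤ 1 := by
      nlinarith [sq_abs ⟪(v : E), Ω⟫, abs_nonneg ⟪(v : E), Ω⟫]
    have ht0 : (0 : ℝ) ≤ ⟪(v : E), Ω⟫ ^ 2 := sq_nonneg _
    have k1 : (0:ℝ) ≤ (η + |η|) * ⟪(v : E), Ω⟫ ^ 2 :=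
      mul_nonneg (by linarith [neg_abs_le η]) ht0
    have k2 : (0:ℝ) ≤ |η| * (1 - ⟪(v : E), Ω⟫ ^ 2) :=
      mul_nonneg (abs_nonneg η) (by linarith)
    nlinarith [k1, k2]
  calc (0 : ℝ) < Real.exp (-|η|) := Real.exp_pos _
    _ = ∫ _ : S, Real.exp (-|η|) ∂σ := by simp
    _ ≤ ∫ v : S, Real.exp (η * ⟪(v : E), Ω⟫ ^ 2) ∂σ :=
        integral_mono (integrable_const _)
          (integrable_of_continuous σ (continuous_expinner η Ω)) h1

lemma integral_gibbs (σ : Measure S) [IsProbabilityMeasure σ] (η : ℝ) (Ω : E) (hΩ : ‖Ω‖ = 1) :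
    ∫ u, gibbs σ η Ω u ∂σ = 1 := by
  unfold gibbs
  rw [integral_div]
  exact div_self (Z_pos σ η Ω hΩ).ne'

end Aux

/-- The Q-tensor of the Gibbs density is uniaxial: `Q_{G_η} = S₂(η) (Ω⊗Ω − Id/n)` with
`S₂(η) = (n/(n−1)) ∫ ((u·Ω)² − 1/n) G_η dσ`, stated entrywise. -/
theorem gibbs_Q_tensor_uniaxial (n : ℕ) (hn : 2 ≤ n)
    (σ : Measure (sphere (0 : EuclideanSpace ℝ (Fin n)) 1))
    (hprob : IsProbabilityMeasure σ) (hinv : RotationInvariant σ)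
    (Ω : EuclideanSpace ℝ (Fin n)) (hΩ : ‖Ω‖ = 1) (η : ℝ) :
    ∀ i j : Fin n,
      (∫ u : sphere (0 : EuclideanSpace ℝ (Fin n)) 1,
          ((u : EuclideanSpace ℝ (Fin n)) i * (u : EuclideanSpace ℝ (Fin n)) j
            - (if i = j then (1 : ℝ) / n else 0)) * gibbs σ η Ω u ∂σ)
        = ((n : ℝ) / ((n : ℝ) - 1) *
            ∫ u : sphere (0 : EuclideanSpace ℝ (Fin n)) 1,
              (⟪(u : EuclideanSpace ℝ (Fin n)), Ω⟫ ^ 2 - 1 / n) * gibbs σ η Ω u ∂σ) *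
          (Ω i * Ω j - (if i = j then (1 : ℝ) / n else 0)) := by
  haveI := hprob
  set g := gibbs σ η Ω with hgdef
  have hgc : Continuous g := continuous_gibbs σ η Ω
  have hg1 : ∫ u, g u ∂σ = 1 := integral_gibbs σ η Ω hΩ
  have hcont : ∀ x y : EuclideanSpace ℝ (Fin n),
      Continuous fun u : sphere (0 : EuclideanSpace ℝ (Fin n)) 1 =>
        ⟪(u : EuclideanSpace ℝ (Fin n)), x⟫ * ⟪(u : EuclideanSpace ℝ (Fin n)), y⟫ * g u :=
    fun x y => ((continuous_subtype_val.inner continuous_const).mul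
      (continuous_subtype_val.inner continuous_const)).mul hgc
  have hI : ∀ x y : EuclideanSpace ℝ (Fin n),
      Integrable (fun u : sphere (0 : EuclideanSpace ℝ (Fin n)) 1 =>
        ⟪(u : EuclideanSpace ℝ (Fin n)), x⟫ * ⟪(u : EuclideanSpace ℝ (Fin n)), y⟫ * g u) σ :=
    fun x y => integrable_of_continuous σ (hcont x y)
  set B : EuclideanSpace ℝ (Fin n) → EuclideanSpace ℝ (Fin n) → ℝ := fun x y =>
    ∫ u : sphere (0 : EuclideanSpace ℝ (Fin n)) 1,
      ⟪(u : EuclideanSpace ℝ (Fin n)), x⟫ * ⟪(u : EuclideanSpace ℝ (Fin n)), y⟫ * g u ∂σ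
    with hBdef
  -- symmetry and bilinearity
  have hBsymm : ∀ x y, B x y = B y x := by
    intro x y; simp only [hBdef]; congr 1; funext u; ring
  have hBadd : ∀ x y z, B (x + y) z = B x z + B y z := by
    intro x y z
    simp only [hBdef]
    rw [← integral_add (hI x z) (hI y z)]
    congr 1; funext u
    rw [inner_add_right]; ring
  have hBaddr : ∀ x y z, B x (y + z) = B x y + B x z := by
    intro x y z
    rw [hBsymm, hBadd, hBsymm y x, hBsymm z x]
  have hBsmul : ∀ (a : ℝ) x y, B (a • x) y = a * B x y := by
    intro a x y
    simp only [hBdef]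
    rw [← integral_const_mul]
    congr 1; funext u
    rw [real_inner_smul_right]; ring
  have hBsmulr : ∀ (a : ℝ) x y, B x (a • y) = a * B x y := by
    intro a x y
    rw [hBsymm, hBsmul, hBsymm y x]
  -- invariance under reflections fixing Ω
  have hswap : ∀ w : EuclideanSpace ℝ (Fin n), ⟪w, Ω⟫ = 0 → ∀ x y,
      B ((Submodule.reflection (ℝ ∙ w)ᗮ) x) ((Submodule.reflection (ℝ ∙ w)ᗮ) y) = B x y := by
    intro w hw x y
    set R := Submodule.reflection (ℝ ∙ w)ᗮ with hRdef
    have hRΩ : R Ω = Ω := Submodule.reflection_mem_subspace_eq_self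
      (Submodule.mem_orthogonal_singleton_iff_inner_right.mpr hw)
    have hkey : ∀ u : sphere (0 : EuclideanSpace ℝ (Fin n)) 1,
        (fun v : sphere (0 : EuclideanSpace ℝ (Fin n)) 1 =>
          ⟪(v : EuclideanSpace ℝ (Fin n)), R x⟫ * ⟪(v : EuclideanSpace ℝ (Fin n)), R y⟫ * g v)
          (sphereMap R u)
        = ⟪(u : EuclideanSpace ℝ (Fin n)), x⟫ * ⟪(u : EuclideanSpace ℝ (Fin n)), y⟫ * g u := by
      intro u
      have hco : ((sphereMap R u : sphere (0 : EuclideanSpace ℝ (Fin n)) 1) :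
          EuclideanSpace ℝ (Fin n)) = R (u : EuclideanSpace ℝ (Fin n)) := rfl
      have hinn : ⟪R (u : EuclideanSpace ℝ (Fin n)), Ω⟫ = ⟪(u : EuclideanSpace ℝ (Fin n)), Ω⟫ := by
        conv_lhs => rw [← hRΩ]
        rw [R.inner_map_map]
      have h3 : g (sphereMap R u) = g u := by
        simp only [hgdef, gibbs, hco, hinn]
      simp only [hco, R.inner_map_map, h3]
    calc B (R x) (R y)
        = ∫ u, (fun v : sphere (0 : EuclideanSpace ℝ (Fin n)) 1 =>
            ⟪(v : EuclideanSpace ℝ (Fin n)), R x⟫ * ⟪(v : EuclideanSpace ℝ (Fin n)), R y⟫ * g v)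
            (sphereMap R u) ∂σ := by
          rw [integral_sphereMap σ hinv R (hcont (R x) (R y))]
      _ = B x y := by
          simp only [hBdef]
          congr 1; funext u; exact hkey u
  -- B Ω w = 0 for w ⟂ Ω
  have hBOrth : ∀ w : EuclideanSpace ℝ (Fin n), ⟪w, Ω⟫ = 0 → B Ω w = 0 := by
    intro w hw
    have h := hswap w hw Ω w
    rw [Submodule.reflection_mem_subspace_eq_self
        (Submodule.mem_orthogonal_singleton_iff_inner_right.mpr hw),
      Submodule.reflection_orthogonalComplement_singleton_eq_neg] at h
    have h2 : B Ω (-w) = - B Ω w := by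
      rw [show -w = (-1 : ℝ) • w by simp, hBsmulr]; ring
    rw [h2] at h
    linarith
  -- equal diagonal values on equal-norm vectors orthogonal to Ω
  have hBdiag : ∀ p q : EuclideanSpace ℝ (Fin n), ⟪p, Ω⟫ = 0 → ⟪q, Ω⟫ = 0 → ‖p‖ = ‖q‖ →
      B p p = B q q := by
    intro p q hp hq hnorm
    by_cases hpq : p = q
    · rw [hpq]
    · have hw : ⟪p - q, Ω⟫ = 0 := by rw [inner_sub_left, hp, hq]; ring
      have h := hswap (p - q) hw p p
      rw [Submodule.reflection_sub hnorm] at h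
      exact h.symm
  -- a unit vector orthogonal to Ω
  have hΩne : Ω ≠ 0 := by
    intro h; rw [h, norm_zero] at hΩ; norm_num at hΩ
  have hfr : 0 < Module.finrank ℝ ((ℝ ∙ Ω)ᗮ : Submodule ℝ (EuclideanSpace ℝ (Fin n))) := by
    have h1 := Submodule.finrank_add_finrank_orthogonal
      (K := (ℝ ∙ Ω : Submodule ℝ (EuclideanSpace ℝ (Fin n))))
    rw [finrank_span_singleton hΩne] at h1
    have h2 : Module.finrank ℝ (EuclideanSpace ℝ (Fin n)) = n := finrank_euclideanSpace_fin
    omega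
  have hnebot : ((ℝ ∙ Ω)ᗮ : Submodule ℝ (EuclideanSpace ℝ (Fin n))) ≠ ⊥ := by
    intro hbot
    rw [hbot] at hfr
    simp at hfr
  obtain ⟨w', hw'mem, hw'ne⟩ := (Submodule.ne_bot_iff _).mp hnebot
  have hw'Ω : ⟪w', Ω⟫ = 0 := Submodule.mem_orthogonal_singleton_iff_inner_left.mp hw'mem
  set w₀ : EuclideanSpace ℝ (Fin n) := ‖w'‖⁻¹ • w' with hw₀def
  have hw₀norm : ‖w₀‖ = 1 := norm_smul_inv_norm hw'ne
  have hw₀Ω : ⟪w₀, Ω⟫ = 0 := by rw [hw₀def, real_inner_smul_left, hw'Ω]; ring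
  set c := B w₀ w₀ with hcdef
  set t := B Ω Ω with htdef
  -- B p p = c ‖p‖² for p ⟂ Ω
  have hBsq : ∀ p : EuclideanSpace ℝ (Fin n), ⟪p, Ω⟫ = 0 → B p p = c * ‖p‖ ^ 2 := by
    intro p hp
    by_cases hp0 : p = 0
    · simp only [hp0, hBdef, inner_zero_right, zero_mul, mul_zero, integral_zero, norm_zero]
      ring
    · have hup : ‖(‖p‖⁻¹ • p)‖ = 1 := norm_smul_inv_norm hp0
      have hupΩ : ⟪‖p‖⁻¹ • p, Ω⟫ = 0 := by rw [real_inner_smul_left, hp]; ring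
      have h1 : B (‖p‖⁻¹ • p) (‖p‖⁻¹ • p) = c :=
        hBdiag _ w₀ hupΩ hw₀Ω (by rw [hup, hw₀norm])
      rw [hBsmul, hBsmulr] at h1
      have hpn : ‖p‖ ≠ 0 := norm_ne_zero_iff.mpr hp0
      field_simp at h1
      nlinarith [h1]
  -- polarization: B p q = c ⟪p, q⟫ for p, q ⟂ Ω
  have hBpolar : ∀ p q : EuclideanSpace ℝ (Fin n), ⟪p, Ω⟫ = 0 → ⟪q, Ω⟫ = 0 →
      B p q = c * ⟪p, q⟫ := by
    intro p q hp hq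
    have hpq : ⟪p + q, Ω⟫ = 0 := by rw [inner_add_left, hp, hq]; ring
    have h1 : B (p + q) (p + q) = B p p + B p q + (B q p + B q q) := by
      rw [hBadd, hBaddr p p q, hBaddr q p q]
    have h2 := hBsq (p + q) hpq
    rw [norm_add_sq_real] at h2
    have h3 := hBsq p hp
    have h4 := hBsq q hq
    have h5 := hBsymm q p
    have h2' : B (p + q) (p + q) = c * ‖p‖ ^ 2 + 2 * (c * ⟪p, q⟫) + c * ‖q‖ ^ 2 := by
      rw [h2]; ring
    linarith [h1, h2', h3, h4, h5]
  -- entries of B in the standard basis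
  set s : Fin n → EuclideanSpace ℝ (Fin n) := fun k => EuclideanSpace.single k 1 with hsdef
  have hsΩ : ∀ k, ⟪s k, Ω⟫ = Ω k := by
    intro k; rw [hsdef]; rw [EuclideanSpace.inner_single_left]; simp
  have hΩs : ∀ k, ⟪Ω, s k⟫ = Ω k := by
    intro k; rw [real_inner_comm]; exact hsΩ k
  have hΩΩ : ⟪Ω, Ω⟫ = 1 := by
    rw [real_inner_self_eq_norm_sq, hΩ]; norm_num
  set p : Fin n → EuclideanSpace ℝ (Fin n) := fun k => s k - Ω k • Ω with hpdef
  have hpΩ : ∀ k, ⟪p k, Ω⟫ = 0 := by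
    intro k
    rw [hpdef]
    simp only
    rw [inner_sub_left, real_inner_smul_left, hsΩ, hΩΩ]
    ring
  have hss : ∀ i j : Fin n, ⟪s i, s j⟫ = if i = j then (1:ℝ) else 0 := by
    intro i j
    rw [hsdef]
    simp only
    rw [EuclideanSpace.inner_single_left]
    simp [EuclideanSpace.single_apply]
  have hpp : ∀ i j : Fin n, ⟪p i, p j⟫ = (if i = j then (1:ℝ) else 0) - Ω i * Ω j := by
    intro i j
    rw [hpdef]
    simp only
    rw [inner_sub_left, inner_sub_right, inner_sub_right, real_inner_smul_left,
      real_inner_smul_left, real_inner_smul_right, real_inner_smul_right, hss, hsΩ, hΩs, hΩΩ]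
    ring
  have hent : ∀ i j : Fin n, B (s i) (s j)
      = t * (Ω i * Ω j) + c * ((if i = j then (1:ℝ) else 0) - Ω i * Ω j) := by
    intro i j
    have hdi : s i = Ω i • Ω + p i := by rw [hpdef]; simp only; abel
    have hdj : s j = Ω j • Ω + p j := by rw [hpdef]; simp only; abel
    have e1 : B (s i) (s j) = B (Ω i • Ω) (Ω j • Ω) + B (Ω i • Ω) (p j)
        + (B (p i) (Ω j • Ω) + B (p i) (p j)) := by
      rw [hdi, hdj, hBadd, hBaddr, hBaddr]
    have e2 : B (Ω i • Ω) (Ω j • Ω) = Ω i * (Ω j * t) := by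
      rw [hBsmul, hBsmulr, ← htdef]
    have e3 : B (Ω i • Ω) (p j) = 0 := by
      rw [hBsmul, hBOrth (p j) (hpΩ j), mul_zero]
    have e4 : B (p i) (Ω j • Ω) = 0 := by
      rw [hBsmulr, hBsymm (p i) Ω, hBOrth (p i) (hpΩ i), mul_zero]
    have e5 : B (p i) (p j) = c * ((if i = j then (1:ℝ) else 0) - Ω i * Ω j) := by
      rw [hBpolar (p i) (p j) (hpΩ i) (hpΩ j), hpp]
    rw [e1, e2, e3, e4, e5]
    ring
  -- trace identity
  have hΩsum : ∑ i, Ω i * Ω i = 1 := by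
    have h3 : ⟪Ω, Ω⟫ = ∑ i, Ω i * Ω i := by
      rw [PiLp.inner_apply]
      congr 1
    rw [← h3, hΩΩ]
  have htrace : t + c * ((n : ℝ) - 1) = 1 := by
    have hsu : ∀ u : sphere (0 : EuclideanSpace ℝ (Fin n)) 1, ∀ k,
        ⟪(u : EuclideanSpace ℝ (Fin n)), s k⟫ = (u : EuclideanSpace ℝ (Fin n)) k := by
      intro u k
      rw [hsdef]
      simp only
      rw [EuclideanSpace.inner_single_right]
      simp
    have hsum : ∑ i, B (s i) (s i) = 1 := by
      simp only [hBdef]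
      rw [← integral_finset_sum _ (fun i _ => hI (s i) (s i))]
      have hpt : ∀ u : sphere (0 : EuclideanSpace ℝ (Fin n)) 1,
          ∑ i, ⟪(u : EuclideanSpace ℝ (Fin n)), s i⟫ * ⟪(u : EuclideanSpace ℝ (Fin n)), s i⟫
            * g u = g u := by
        intro u
        simp_rw [hsu u]
        rw [← Finset.sum_mul]
        have h2 : ∑ i, (u : EuclideanSpace ℝ (Fin n)) i * (u : EuclideanSpace ℝ (Fin n)) i
            = 1 := by
          have h3 : ⟪(u : EuclideanSpace ℝ (Fin n)), (u : EuclideanSpace ℝ (Fin n))⟫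
              = ∑ i, (u : EuclideanSpace ℝ (Fin n)) i * (u : EuclideanSpace ℝ (Fin n)) i := by
            rw [PiLp.inner_apply]
            congr 1
          rw [← h3, real_inner_self_eq_norm_sq, mem_sphere_zero_iff_norm.mp u.2]
          norm_num
        rw [h2, one_mul]
      have h8 := integral_congr_ae (μ := σ) (Filter.Eventually.of_forall hpt)
      rw [h8, hg1]
    have h7 : ∑ i, B (s i) (s i)
        = t * (∑ i, Ω i * Ω i) + c * ((n : ℝ) - ∑ i, Ω i * Ω i) := by
      rw [Finset.sum_congr rfl (fun i _ => hent i i)]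
      simp only [if_pos rfl]
      rw [Finset.sum_add_distrib, ← Finset.mul_sum, ← Finset.mul_sum, Finset.sum_sub_distrib]
      simp [mul_sub, Finset.mul_sum]
    rw [hsum, hΩsum] at h7
    linarith [h7.symm]
  -- final assembly
  intro i j
  have hL : (∫ u : sphere (0 : EuclideanSpace ℝ (Fin n)) 1,
        ((u : EuclideanSpace ℝ (Fin n)) i * (u : EuclideanSpace ℝ (Fin n)) j
          - (if i = j then (1 : ℝ) / n else 0)) * g u ∂σ)
      = B (s i) (s j) - (if i = j then (1 : ℝ) / n else 0) := by
    have hsu : ∀ u : sphere (0 : EuclideanSpace ℝ (Fin n)) 1, ∀ k,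
        ⟪(u : EuclideanSpace ℝ (Fin n)), s k⟫ = (u : EuclideanSpace ℝ (Fin n)) k := by
      intro u k
      rw [hsdef]
      simp only
      rw [EuclideanSpace.inner_single_right]
      simp
    have h1 : ∀ u : sphere (0 : EuclideanSpace ℝ (Fin n)) 1,
        ((u : EuclideanSpace ℝ (Fin n)) i * (u : EuclideanSpace ℝ (Fin n)) j
          - (if i = j then (1 : ℝ) / n else 0)) * g u
        = ⟪(u : EuclideanSpace ℝ (Fin n)), s i⟫ * ⟪(u : EuclideanSpace ℝ (Fin n)), s j⟫ * g u
          - (if i = j then (1 : ℝ) / n else 0) * g u := by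
      intro u
      rw [hsu u i, hsu u j]
      ring
    calc (∫ u, ((u : EuclideanSpace ℝ (Fin n)) i * (u : EuclideanSpace ℝ (Fin n)) j
            - (if i = j then (1 : ℝ) / n else 0)) * g u ∂σ)
        = ∫ u, (⟪(u : EuclideanSpace ℝ (Fin n)), s i⟫ * ⟪(u : EuclideanSpace ℝ (Fin n)), s j⟫
              * g u - (if i = j then (1 : ℝ) / n else 0) * g u) ∂σ := by
          congr 1; funext u; exact h1 u
      _ = B (s i) (s j) - (if i = j then (1 : ℝ) / n else 0) := by
          rw [integral_sub (hI (s i) (s j))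
            ((integrable_of_continuous σ hgc).const_mul _), integral_const_mul, hg1, mul_one]
  have hR : (∫ u : sphere (0 : EuclideanSpace ℝ (Fin n)) 1,
        (⟪(u : EuclideanSpace ℝ (Fin n)), Ω⟫ ^ 2 - 1 / n) * g u ∂σ) = t - 1 / n := by
    have h1 : ∀ u : sphere (0 : EuclideanSpace ℝ (Fin n)) 1,
        (⟪(u : EuclideanSpace ℝ (Fin n)), Ω⟫ ^ 2 - 1 / n) * g u
        = ⟪(u : EuclideanSpace ℝ (Fin n)), Ω⟫ * ⟪(u : EuclideanSpace ℝ (Fin n)), Ω⟫ * g u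
          - (1 / n : ℝ) * g u := by
      intro u; ring
    calc (∫ u, (⟪(u : EuclideanSpace ℝ (Fin n)), Ω⟫ ^ 2 - 1 / n) * g u ∂σ)
        = ∫ u, (⟪(u : EuclideanSpace ℝ (Fin n)), Ω⟫ * ⟪(u : EuclideanSpace ℝ (Fin n)), Ω⟫ * g u
            - (1 / n : ℝ) * g u) ∂σ := by
          congr 1; funext u; exact h1 u
      _ = t - 1 / n := by
          rw [integral_sub (hI Ω Ω) ((integrable_of_continuous σ hgc).const_mul _),
            integral_const_mul, hg1, mul_one, htdef]
  rw [hL, hR, hent i j]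
  have hn2 : (2 : ℝ) ≤ (n : ℝ) := by exact_mod_cast hn
  have hn0 : (n : ℝ) ≠ 0 := by linarith
  have hn1 : (n : ℝ) - 1 ≠ 0 := by linarith
  have hif : (if i = j then (1 : ℝ) / n else 0) = (if i = j then (1 : ℝ) else 0) / n := by
    split <;> simp
  have hc2 : c = (1 - t) / ((n : ℝ) - 1) := by
    field_simp
    linarith [htrace]
  rw [hif, hc2]
  by_cases hij : i = j
  · simp only [hij, if_true, eq_self_iff_true]
    field_simp
    ring
  · simp only [if_neg hij]
    field_simp
    ring
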